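/- With θ as above on F₂ = ⟨a, b⟩ into the free group on ξ₁, ξ₂, ξ₃: if s₁⋯sₙ is cyclically reduced in {a^{±1}, b^{±1}}, then the reduced word θ(s₁⋯sₙ) is either cyclically reduced, or of the form t w t' where w is cyclically reduced and t' = t⁻¹ (i.e., {t, t'} = {ξᵢ, ξᵢ⁻¹} for some i). -/

import Mathlib

/-- The image of a generator letter of `F₂` under `θ`, as a word in the letters
`ξ₁, ξ₂, ξ₃` (elements of `Fin 3`, with the Bool recording inversion):
`θ(a) = ξ₁ξ₂⁻¹`, `θ(a⁻¹) = ξ₂ξ₁⁻¹`, `θ(b) = ξ₂ξ₃⁻¹`, `θ(b⁻¹) = ξ₃ξ₂⁻¹`. -/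
def thetaBlock (s : Fin 2 × Bool) : List (Fin 3 × Bool) :=
  if s.1 = 0 then
    if s.2 then [(0, true), (1, false)] else [(1, true), (0, false)]
  else
    if s.2 then [(1, true), (2, false)] else [(2, true), (1, false)]

/-- A word is cyclically reduced if it is reduced and its first and last letters
are not mutually inverse. -/
def IsCyclicallyReduced {α : Type*} [DecidableEq α] (L : List (α × Bool)) : Prop :=
  FreeGroup.reduce L = L ∧
    ∀ x ∈ L.head?, ∀ y ∈ L.getLast?, ¬(x.1 = y.1 ∧ x.2 = !y.2)

namespace ThetaAux

def NI {γ : Type*} (x y : γ × Bool) : Prop := ¬(x.1 = y.1 ∧ x.2 = !y.2)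

instance {γ : Type*} [DecidableEq γ] : DecidableRel (@NI γ) := fun _ _ => by
  unfold NI; infer_instance

def agen (s : Fin 2 × Bool) : Fin 3 :=
  if s.1 = 0 then (if s.2 then 0 else 1) else (if s.2 then 1 else 2)

def bgen (s : Fin 2 × Bool) : Fin 3 :=
  if s.1 = 0 then (if s.2 then 1 else 0) else (if s.2 then 2 else 1)

def Af (s : Fin 2 × Bool) : Fin 3 × Bool := (agen s, true)
def Bf (s : Fin 2 × Bool) : Fin 3 × Bool := (bgen s, false)

lemma thetaBlock_eq (s : Fin 2 × Bool) : thetaBlock s = [Af s, Bf s] := by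
  revert s; decide

lemma d3 (s : Fin 2 × Bool) : agen s ≠ bgen s := by revert s; decide

lemma NI_symm {s t : Fin 2 × Bool} (h : NI s t) : NI t s := by revert h; revert s t; decide

lemma d4 : ∀ s s' s'' : Fin 2 × Bool, NI s s' → NI s' s'' → bgen s = agen s' →
    bgen s' ≠ agen s'' := by decide

lemma d5 : ∀ s s' : Fin 2 × Bool, NI s s' → bgen s = agen s' → agen s ≠ bgen s' := by decide

lemma d6 : ∀ s t : Fin 2 × Bool, NI s t → bgen t = agen s → bgen s ≠ agen t := by decide

/-- Reduced words are exactly chains with no adjacent inverse pair. -/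
lemma reduce_of_chain {γ : Type*} [DecidableEq γ] :
    ∀ {w : List (γ × Bool)}, List.Chain' NI w → FreeGroup.reduce w = w := by
  intro w
  induction w with
  | nil => intro _; rfl
  | cons x l ih =>
    intro h
    rw [FreeGroup.reduce.cons, ih h.tail]
    cases l with
    | nil => rfl
    | cons y ys =>
      have hxy : NI x y := (List.isChain_cons_cons.mp h).1
      simp only [NI] at hxy
      simp [hxy]

lemma reduce_length_le {γ : Type*} [DecidableEq γ] :
    ∀ (w : List (γ × Bool)), (FreeGroup.reduce w).length ≤ w.length := by
  intro w
  induction w with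
  | nil => simp
  | cons x l ih =>
    rw [FreeGroup.reduce.cons]
    cases h : FreeGroup.reduce l with
    | nil => simp
    | cons y ys =>
      rw [h] at ih
      dsimp only
      split
      · simp at ih ⊢; omega
      · simp at ih ⊢; omega

lemma chain_of_reduce {γ : Type*} [DecidableEq γ] :
    ∀ {w : List (γ × Bool)}, FreeGroup.reduce w = w → List.Chain' NI w := by
  intro w
  induction w with
  | nil => intro _; simp [List.Chain']
  | cons x l ih =>
    intro h
    rw [FreeGroup.reduce.cons] at h
    cases hr : FreeGroup.reduce l with
    | nil =>
      rw [hr] at h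
      simp only at h
      have : l = [] := by
        have := congrArg List.length h; simpa using this.symm
      subst this; simp [List.Chain']
    | cons y ys =>
      rw [hr] at h
      dsimp only at h
      by_cases hc : x.1 = y.1 ∧ x.2 = !y.2
      · rw [if_pos hc] at h
        have h1 := reduce_length_le l
        rw [hr] at h1
        have := congrArg List.length h
        simp at this h1; omega
      · rw [if_neg hc] at h
        have hl : l = y :: ys := by
          simpa using (List.cons_injective.eq_iff.mp h).symm
        subst hl
        rw [List.Chain', List.isChain_cons_cons]
        exact ⟨hc, ih hr⟩


def fw : List (Fin 2 × Bool) → List (Fin 3 × Bool)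
  | [] => []
  | [s] => [Af s, Bf s]
  | s :: s' :: rest =>
      if bgen s = agen s' then Af s :: (fw (s' :: rest)).tail
      else Af s :: Bf s :: fw (s' :: rest)

lemma fw_head : ∀ (s : Fin 2 × Bool) (rest : List (Fin 2 × Bool)),
    ∃ u, fw (s :: rest) = Af s :: u := by
  intro s rest
  cases rest with
  | nil => exact ⟨[Bf s], rfl⟩
  | cons s' r =>
    by_cases h : bgen s = agen s'
    · exact ⟨_, by rw [fw, if_pos h]⟩
    · exact ⟨_, by rw [fw, if_neg h]⟩

/-- If the junction `s`–`s'` cancels (in a reduced context), the next junction does not,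
so `fw (s' :: rest)` keeps both letters of the block of `s'`. -/
lemma fw_no_double (s s' : Fin 2 × Bool) (rest : List (Fin 2 × Bool))
    (h : List.Chain' NI (s :: s' :: rest)) (hc : bgen s = agen s') :
    fw (s' :: rest) = Af s' :: Bf s' :: fw rest := by
  cases rest with
  | nil => rfl
  | cons s'' r =>
    have h1 : NI s s' := (List.isChain_cons_cons.mp h).1
    have h2 : NI s' s'' := (List.isChain_cons_cons.mp (List.isChain_cons_cons.mp h).2).1
    rw [fw, if_neg (d4 s s' s'' h1 h2 hc)]

lemma fw_chain : ∀ (L : List (Fin 2 × Bool)), List.Chain' NI L → List.Chain' NI (fw L) := by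
  intro L
  induction L using fw.induct with
  | case1 => intro _; simp [fw, List.Chain']
  | case2 s =>
    intro _
    show List.Chain' NI [Af s, Bf s]
    simp only [List.Chain', List.isChain_cons_cons, List.isChain_singleton, and_true]
    exact fun hh => d3 s (by simpa [Af, Bf] using hh.1)
  | case3 s s' rest hc ih =>
    intro h
    rw [fw, if_pos hc, fw_no_double s s' rest h hc, List.tail_cons]
    have hch : List.Chain' NI (Af s' :: Bf s' :: fw rest) := by
      rw [← fw_no_double s s' rest h hc]; exact ih h.tail
    rw [List.Chain', List.isChain_cons_cons]
    refine ⟨?_, hch.tail⟩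
    have h1 : NI s s' := (List.isChain_cons_cons.mp h).1
    exact fun hh => d5 s s' h1 hc (by simpa [Af, Bf] using hh.1)
  | case4 s s' rest hc ih =>
    intro h
    rw [fw, if_neg hc]
    rw [List.Chain', List.isChain_cons_cons, List.isChain_cons]
    obtain ⟨u, hu⟩ := fw_head s' rest
    refine ⟨?_, ?_, ih h.tail⟩
    · exact fun hh => d3 s (by simpa [Af, Bf] using hh.1)
    · intro y hy
      rw [hu] at hy
      simp only [List.head?_cons, Option.mem_some_iff] at hy
      subst hy
      exact fun hh => hc (by simpa [Af, Bf] using hh.1)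

lemma fw_ne_nil : ∀ (s : Fin 2 × Bool) (rest : List (Fin 2 × Bool)), fw (s :: rest) ≠ [] := by
  intro s rest
  obtain ⟨u, hu⟩ := fw_head s rest
  simp [hu]

lemma getLast?_cons_of_ne_nil {γ : Type*} (x : γ) {l : List γ} (h : l ≠ []) :
    (x :: l).getLast? = l.getLast? := by
  cases l with
  | nil => exact absurd rfl h
  | cons a u => rw [List.getLast?_cons_cons]

lemma fw_getLast : ∀ (L : List (Fin 2 × Bool)), List.Chain' NI L → ∀ (h : L ≠ []),
    (fw L).getLast? = some (Bf (L.getLast h)) := by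
  intro L
  induction L using fw.induct with
  | case1 => intro _ h; exact absurd rfl h
  | case2 s => intro _ _; rfl
  | case3 s s' rest hc ih =>
    intro hch h
    rw [fw, if_pos hc, fw_no_double s s' rest hch hc, List.tail_cons]
    have h2 := ih hch.tail (by simp)
    rw [fw_no_double s s' rest hch hc] at h2
    have : (Af s :: Bf s' :: fw rest).getLast? = (Af s' :: Bf s' :: fw rest).getLast? := by
      simp [List.getLast?_cons_cons]
    rw [this, h2]
    rfl
  | case4 s s' rest hc ih =>
    intro hch h
    rw [fw, if_neg hc]
    have h2 := ih hch.tail (by simp)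
    have : (Af s :: Bf s :: fw (s' :: rest)).getLast? = (fw (s' :: rest)).getLast? := by
      rw [List.getLast?_cons_cons]
      cases hfw : fw (s' :: rest) with
      | nil => exact absurd hfw (fw_ne_nil s' rest)
      | cons a u => simp [List.getLast?_cons_cons]
    rw [this, h2]
    rfl

lemma fw_mk : ∀ (L : List (Fin 2 × Bool)), List.Chain' NI L →
    FreeGroup.mk (L.flatMap thetaBlock) = FreeGroup.mk (fw L) := by
  intro L
  induction L using fw.induct with
  | case1 => intro _; rfl
  | case2 s => intro _; simp [fw, thetaBlock_eq]
  | case3 s s' rest hc ih =>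
    intro h
    rw [fw, if_pos hc, fw_no_double s s' rest h hc, List.tail_cons]
    have hIH := ih h.tail
    rw [fw_no_double s s' rest h hc] at hIH
    have hfm : (s :: s' :: rest).flatMap thetaBlock
        = [Af s, Bf s] ++ (s' :: rest).flatMap thetaBlock := by
      rw [List.flatMap_cons, thetaBlock_eq]
    rw [hfm, ← FreeGroup.mul_mk, hIH, FreeGroup.mul_mk]
    have : [Af s, Bf s] ++ Af s' :: Bf s' :: fw rest
        = [Af s] ++ (bgen s, false) :: (bgen s, !false) :: (Bf s' :: fw rest) := by
      simp [Af, Bf, hc]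
    rw [this]
    exact Quot.sound FreeGroup.Red.Step.not
  | case4 s s' rest hc ih =>
    intro h
    rw [fw, if_neg hc]
    have hIH := ih h.tail
    have hfm : (s :: s' :: rest).flatMap thetaBlock
        = [Af s, Bf s] ++ (s' :: rest).flatMap thetaBlock := by
      rw [List.flatMap_cons, thetaBlock_eq]
    rw [hfm, ← FreeGroup.mul_mk, hIH, FreeGroup.mul_mk]
    rfl

/-- Second letter when the first junction does not cancel. -/
lemma fw_second (s s' : Fin 2 × Bool) (rest : List (Fin 2 × Bool))
    (hc : ¬ bgen s = agen s') :
    fw (s :: s' :: rest) = Af s :: Bf s :: fw (s' :: rest) := by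
  rw [fw, if_neg hc]

/-- Last two letters when the last junction does not cancel. -/
lemma fw_lastpair : ∀ (u : List (Fin 2 × Bool)) (p q : Fin 2 × Bool),
    List.Chain' NI (u ++ [p, q]) → ¬ bgen p = agen q →
    ∃ v, fw (u ++ [p, q]) = v ++ [Af q, Bf q] := by
  intro u
  induction u with
  | nil =>
    intro p q _ hc
    exact ⟨[Af p, Bf p], by rw [List.nil_append, fw_second p q [] hc]; rfl⟩
  | cons s u' ih =>
    intro p q hch hc
    obtain ⟨m, M', hM'⟩ : ∃ m M', u' ++ [p, q] = m :: M' := by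
      cases hMM : u' ++ [p, q] with
      | nil => simp at hMM
      | cons a b => exact ⟨a, b, rfl⟩
    have hL : (s :: u') ++ [p, q] = s :: m :: M' := by rw [List.cons_append, hM']
    have hch2 : List.Chain' NI (s :: m :: M') := by rwa [hL] at hch
    obtain ⟨v, hv⟩ := ih p q (by simpa [List.Chain'] using hch.tail) hc
    rw [hM'] at hv
    by_cases hcan : bgen s = agen m
    · have hnd := fw_no_double s m M' hch2 hcan
      cases v with
      | nil =>
        exfalso
        rw [hnd] at hv
        simp only [List.nil_append] at hv
        have hlen := congrArg List.length hv
        simp only [List.length_cons, List.length_nil] at hlen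
        have hfnil : fw M' = [] := List.length_eq_zero_iff.mp (by omega)
        cases M' with
        | nil =>
          have := congrArg List.length hM'
          simp at this
        | cons a b => exact fw_ne_nil a b hfnil
      | cons v0 v' =>
        refine ⟨Af s :: v', ?_⟩
        rw [hL, fw, if_pos hcan, hv]
        simp
    · refine ⟨Af s :: Bf s :: v, ?_⟩
      rw [hL, fw, if_neg hcan, hv]
      simp

end ThetaAux

/-- For a cyclically reduced word `s₁⋯sₙ` in `F₂`, the reduced word `θ(s₁⋯sₙ)` is
either cyclically reduced, or of the form `t w t⁻¹` with `w` cyclically reduced. -/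
theorem theta_cyclically_reduced_or_conjugate (L : List (Fin 2 × Bool))
    (hL : IsCyclicallyReduced L) :
    IsCyclicallyReduced ((FreeGroup.mk (L.flatMap thetaBlock)).toWord) ∨
    ∃ (t : Fin 3 × Bool) (w : List (Fin 3 × Bool)),
      (FreeGroup.mk (L.flatMap thetaBlock)).toWord = t :: (w ++ [(t.1, !t.2)]) ∧
      IsCyclicallyReduced w := by
  classical
  obtain ⟨hred, hcyc⟩ := hL
  have hc : List.Chain' ThetaAux.NI L := ThetaAux.chain_of_reduce hred
  have hW : (FreeGroup.mk (L.flatMap thetaBlock)).toWord = ThetaAux.fw L := by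
    rw [FreeGroup.toWord_mk, FreeGroup.reduce.sound (ThetaAux.fw_mk L hc),
      ThetaAux.reduce_of_chain (ThetaAux.fw_chain L hc)]
  cases L with
  | nil =>
    left
    rw [hW]
    exact ⟨rfl, by simp [ThetaAux.fw]⟩
  | cons s rest =>
    set L := s :: rest with hLdef
    have hLne : L ≠ [] := by simp [hLdef]
    set t := L.getLast hLne with htdef
    have hlast : (ThetaAux.fw L).getLast? = some (ThetaAux.Bf t) :=
      ThetaAux.fw_getLast L hc hLne
    obtain ⟨u, hu⟩ := ThetaAux.fw_head s rest
    have hNIst : ThetaAux.NI s t := by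
      have := hcyc s (by simp [hLdef]) t
        (by rw [List.getLast?_eq_getLast hLne]; rfl)
      exact this
    by_cases hgt : ThetaAux.bgen t = ThetaAux.agen s
    · -- conjugate case
      right
      have hNIts : ThetaAux.NI t s := ThetaAux.NI_symm hNIst
      -- rest is nonempty
      obtain ⟨s', rest', hrest⟩ : ∃ s' rest', rest = s' :: rest' := by
        cases rest with
        | nil =>
          exfalso
          have hts : t = s := by simp [htdef, hLdef]
          rw [hts] at hgt
          exact ThetaAux.d3 s hgt.symm
        | cons a b => exact ⟨a, b, rfl⟩
      have hNIss' : ThetaAux.NI s s' := by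
        rw [hLdef, hrest] at hc
        exact (List.isChain_cons_cons.mp hc).1
      have hns' : ¬ ThetaAux.bgen s = ThetaAux.agen s' :=
        ThetaAux.d4 t s s' hNIts hNIss' hgt
      have hW2 : ThetaAux.fw L = ThetaAux.Af s :: ThetaAux.Bf s :: ThetaAux.fw (s' :: rest') := by
        rw [hLdef, hrest]
        exact ThetaAux.fw_second s s' rest' hns'
      -- decompose L = u₀ ++ [p, t]
      have hdlne : L.dropLast ≠ [] := by
        rw [hLdef, hrest]; simp
      set p := L.dropLast.getLast hdlne with hpdef
      have hdecomp : L.dropLast.dropLast ++ [p, t] = L := by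
        have h1 : L.dropLast ++ [t] = L := List.dropLast_append_getLast hLne
        have h2 : L.dropLast.dropLast ++ [p] = L.dropLast := List.dropLast_append_getLast hdlne
        rw [← h1, ← h2]
        simp
      have hNIpt : ThetaAux.NI p t := by
        have hsuf : [p, t] <:+ L := ⟨L.dropLast.dropLast, hdecomp⟩
        have := (hc.suffix hsuf)
        exact (List.isChain_cons_cons.mp this).1
      have hnp : ¬ ThetaAux.bgen p = ThetaAux.agen t :=
        fun hh => ThetaAux.d4 p t s hNIpt hNIts hh hgt
      obtain ⟨v, hv⟩ := ThetaAux.fw_lastpair L.dropLast.dropLast p t (by rw [hdecomp]; exact hc) hnp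
      rw [hdecomp] at hv
      -- the reduced word and its decomposition
      set F := ThetaAux.fw (s' :: rest') with hFdef
      have hFne : F ≠ [] := ThetaAux.fw_ne_nil s' rest'
      have hFlast : F.getLast hFne = ThetaAux.Bf t := by
        have h1 : F.getLast? = (ThetaAux.fw L).getLast? := by
          rw [hW2, ThetaAux.getLast?_cons_of_ne_nil _ (by simp : (ThetaAux.Bf s :: F) ≠ []),
            ThetaAux.getLast?_cons_of_ne_nil _ hFne]
        rw [hlast] at h1
        have := List.getLast?_eq_getLast hFne
        rw [this] at h1
        exact Option.some.inj h1
      set w : List (Fin 3 × Bool) := ThetaAux.Bf s :: F.dropLast with hwdef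
      have hWw : ThetaAux.fw L = ThetaAux.Af s :: (w ++ [ThetaAux.Bf t]) := by
        have hthis : F.dropLast ++ [ThetaAux.Bf t] = F := by
          rw [← hFlast]; exact List.dropLast_append_getLast hFne
        rw [hW2, hwdef, List.cons_append, hthis]
      refine ⟨ThetaAux.Af s, w, ?_, ?_, ?_⟩
      · rw [hW, hWw]
        have : (( ThetaAux.Af s).1, !(ThetaAux.Af s).2) = ThetaAux.Bf t := by
          simp [ThetaAux.Af, ThetaAux.Bf, hgt]
        rw [this]
      · -- w is reduced
        apply ThetaAux.reduce_of_chain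
        have hchW : List.Chain' ThetaAux.NI (ThetaAux.fw L) := ThetaAux.fw_chain L hc
        rw [hWw] at hchW
        exact hchW.tail.prefix ⟨[ThetaAux.Bf t], rfl⟩
      · -- w is cyclically not inverse at ends
        intro x hx y hy
        have hxval : x = ThetaAux.Bf s := by
          rw [hwdef] at hx
          simp only [List.head?_cons, Option.mem_some_iff] at hx
          exact hx.symm
        have hyval : y = ThetaAux.Af t := by
          have hv2 : v ++ [ThetaAux.Af t] = ThetaAux.Af s :: w := by
            apply List.append_cancel_right (bs := [ThetaAux.Bf t])
            have e1 : (v ++ [ThetaAux.Af t]) ++ [ThetaAux.Bf t]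
                = v ++ [ThetaAux.Af t, ThetaAux.Bf t] := by simp
            rw [e1, ← hv, hWw]
            rfl
          have hwne : w ≠ [] := by rw [hwdef]; simp
          have h3 : w.getLast? = some (ThetaAux.Af t) := by
            rw [← ThetaAux.getLast?_cons_of_ne_nil (ThetaAux.Af s) hwne, ← hv2]
            simp
          rw [h3] at hy
          simp only [Option.mem_some_iff] at hy
          exact hy.symm
        rw [hxval, hyval]
        intro hh
        exact ThetaAux.d6 s t hNIst hgt (by simpa [ThetaAux.Af, ThetaAux.Bf] using hh.1)
    · -- cyclically reduced case
      left
      rw [hW]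
      refine ⟨ThetaAux.reduce_of_chain (ThetaAux.fw_chain L hc), ?_⟩
      intro x hx y hy
      rw [hu] at hx
      simp only [List.head?_cons, Option.mem_some_iff] at hx
      rw [hlast] at hy
      simp only [Option.mem_some_iff] at hy
      subst hx; subst hy
      intro hh
      apply hgt
      have h1 := hh.1
      simp only [ThetaAux.Af, ThetaAux.Bf] at h1
      exact h1.symm
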